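/- Recovering the maximum entropy ICE distribution from optimal dual weights: with σ, Φ, r, and the standard ICE polytope P as in the dual formulation, suppose θ* : Φ → ℝ^d attains the infimum of the dual objective θ ↦ Σ_{f∈Φ} max_{g∈Φ} ⟨r(g,σ), θ_f⟩ + log ( Σ_{a∈𝒜} exp( −Σ_{f∈Φ} ⟨r(f,a), θ_f⟩ ) ). Then the Gibbs distribution σ̂ defined by σ̂(a) = exp( −Σ_{f∈Φ} ⟨r(f,a), θ*_f⟩ ) / Σ_{a′∈𝒜} exp( −Σ_{f∈Φ} ⟨r(f,a′), θ*_f⟩ ) belongs to P and maximizes the Shannon entropy over P. -/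

import Mathlib

open scoped BigOperators

/-- Dot product on `ℝ^d`. -/
def dot {d : ℕ} (x w : Fin d → ℝ) : ℝ := ∑ k, x k * w k

/-- `σ` is a probability distribution on the finite set `A`. -/
def IsProb {A : Type} [Fintype A] (σ : A → ℝ) : Prop :=
  (∀ a, 0 ≤ σ a) ∧ ∑ a, σ a = 1

/-- Expected regret features of deviation `f` under distribution `σ`. -/
def expFeat {d : ℕ} {A Φ : Type} [Fintype A] (r : Φ → A → Fin d → ℝ)
    (σ : A → ℝ) (f : Φ) : Fin d → ℝ := ∑ a, σ a • r f a

/-- Membership in the standard ICE polytope relative to `σ`. -/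
def InICE {d : ℕ} {A Φ : Type} [Fintype A] (r : Φ → A → Fin d → ℝ)
    (σ σhat : A → ℝ) : Prop :=
  IsProb σhat ∧ ∀ f : Φ, expFeat r σhat f ∈ convexHull ℝ (Set.range (expFeat r σ))

/-- Shannon entropy `H(σ) = -∑ σ(a) log σ(a)` (with `0 log 0 = 0`). -/
noncomputable def shannonEntropy {A : Type} [Fintype A] (σ : A → ℝ) : ℝ :=
  -∑ a, σ a * Real.log (σ a)

/-- The dual MaxEnt ICE objective. -/
noncomputable def dualObj {d : ℕ} {A Φ : Type} [Fintype A] [Fintype Φ]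
    (r : Φ → A → Fin d → ℝ) (σ : A → ℝ) (θ : Φ → Fin d → ℝ) : ℝ :=
  (∑ f : Φ, ⨆ g : Φ, dot (expFeat r σ g) (θ f)) +
    Real.log (∑ a, Real.exp (-∑ f : Φ, dot (r f a) (θ f)))

lemma dot_add_right {d : ℕ} (x a b : Fin d → ℝ) : dot x (a + b) = dot x a + dot x b := by
  simp [dot, mul_add, Finset.sum_add_distrib]

lemma dot_smul_right {d : ℕ} (x a : Fin d → ℝ) (t : ℝ) : dot x (t • a) = t * dot x a := by
  simp only [dot, Pi.smul_apply, smul_eq_mul, Finset.mul_sum]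
  congr 1; ext k; ring

lemma dot_expFeat {d : ℕ} {A Φ : Type} [Fintype A] (r : Φ → A → Fin d → ℝ)
    (τ : A → ℝ) (f : Φ) (w : Fin d → ℝ) :
    dot (expFeat r τ f) w = ∑ a, τ a * dot (r f a) w := by
  simp only [dot, expFeat, Finset.sum_apply, Pi.smul_apply, smul_eq_mul, Finset.mul_sum]
  rw [Finset.sum_comm]
  refine Finset.sum_congr rfl fun a _ => ?_
  rw [Finset.sum_mul]
  refine Finset.sum_congr rfl fun k _ => by ring

lemma gibbs {A : Type} [Fintype A] [Nonempty A] (τ : A → ℝ) (hτ : IsProb τ) (y : A → ℝ) :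
    ∑ a, τ a * y a - ∑ a, τ a * Real.log (τ a) ≤ Real.log (∑ a, Real.exp (y a)) := by
  set Z := ∑ a, Real.exp (y a) with hZ
  have hZpos : 0 < Z := Finset.sum_pos (fun a _ => Real.exp_pos _) Finset.univ_nonempty
  -- key : for each a, τ a * (y a - log (τ a) - log Z) ≤ exp (y a) / Z - τ a
  have key : ∀ a, τ a * (y a - Real.log (τ a) - Real.log Z) ≤ Real.exp (y a) / Z - τ a := by
    intro a
    rcases eq_or_lt_of_le (hτ.1 a) with h | h
    · simp [← h]; positivity
    · have hx : 0 < Real.exp (y a) / (Z * τ a) := by positivity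
      have := Real.log_le_sub_one_of_pos hx
      have hlog : Real.log (Real.exp (y a) / (Z * τ a)) = y a - Real.log (τ a) - Real.log Z := by
        rw [Real.log_div (by positivity) (by positivity), Real.log_mul (ne_of_gt hZpos) (ne_of_gt h),
          Real.log_exp]; ring
      rw [hlog] at this
      have := mul_le_mul_of_nonneg_left this (le_of_lt h)
      calc τ a * (y a - Real.log (τ a) - Real.log Z) ≤ τ a * (Real.exp (y a) / (Z * τ a) - 1) := this
        _ = Real.exp (y a) / Z - τ a := by field_simp
  have hsum := Finset.sum_le_sum (fun a (_ : a ∈ Finset.univ) => key a)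
  have h1 : ∑ a, τ a * (y a - Real.log (τ a) - Real.log Z)
      = ∑ a, τ a * y a - ∑ a, τ a * Real.log (τ a) - Real.log Z := by
    have : ∀ a : A, τ a * (y a - Real.log (τ a) - Real.log Z)
        = (τ a * y a - τ a * Real.log (τ a)) - τ a * Real.log Z := fun a => by ring
    simp_rw [this]
    rw [Finset.sum_sub_distrib, Finset.sum_sub_distrib, ← Finset.sum_mul, hτ.2, one_mul]
  have h2 : ∑ a, (Real.exp (y a) / Z - τ a) = 0 := by
    rw [Finset.sum_sub_distrib, ← Finset.sum_div, ← hZ, div_self (ne_of_gt hZpos), hτ.2]; ring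
  rw [h1, h2] at hsum
  linarith

lemma isLinearMap_dot_left {d : ℕ} (w : Fin d → ℝ) : IsLinearMap ℝ (fun x => dot x w) := by
  constructor
  · intro a b; simp [dot, add_mul, Finset.sum_add_distrib]
  · intro t a
    simp only [dot, Pi.smul_apply, smul_eq_mul, Finset.mul_sum]
    exact Finset.sum_congr rfl fun k _ => by ring

lemma dot_le_ciSup_of_mem_hull {d : ℕ} {Φ : Type} [Fintype Φ] [Nonempty Φ]
    (v : Φ → Fin d → ℝ) (x : Fin d → ℝ) (hx : x ∈ convexHull ℝ (Set.range v)) (w : Fin d → ℝ) :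
    dot x w ≤ ⨆ g, dot (v g) w := by
  have : convexHull ℝ (Set.range v) ⊆ {y | dot y w ≤ ⨆ g, dot (v g) w} := by
    apply convexHull_min
    · rintro _ ⟨g, rfl⟩
      exact le_ciSup (Finite.bddAbove_range fun g => dot (v g) w) g
    · exact convex_halfSpace_le (isLinearMap_dot_left w) _
  exact this hx

lemma weak_duality {d : ℕ} {A Φ : Type} [Fintype A] [Nonempty A] [Fintype Φ] [Nonempty Φ]
    (r : Φ → A → Fin d → ℝ) (σ : A → ℝ) (θ : Φ → Fin d → ℝ) (τ : A → ℝ)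
    (hτ : InICE r σ τ) : shannonEntropy τ ≤ dualObj r σ θ := by
  obtain ⟨hτp, hτh⟩ := hτ
  have claim1 : ∀ f : Φ, dot (expFeat r τ f) (θ f) ≤ ⨆ g, dot (expFeat r σ g) (θ f) :=
    fun f => dot_le_ciSup_of_mem_hull _ _ (hτh f) _
  have hg := gibbs τ hτp (fun a => -∑ f : Φ, dot (r f a) (θ f))
  have hswap : ∑ a, τ a * (-∑ f : Φ, dot (r f a) (θ f)) = -∑ f : Φ, dot (expFeat r τ f) (θ f) := by
    simp_rw [dot_expFeat, mul_neg, Finset.sum_neg_distrib, Finset.mul_sum]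
    rw [Finset.sum_comm]
  rw [hswap] at hg
  have : ∑ f : Φ, dot (expFeat r τ f) (θ f) ≤ ∑ f : Φ, ⨆ g, dot (expFeat r σ g) (θ f) :=
    Finset.sum_le_sum fun f _ => claim1 f
  unfold shannonEntropy dualObj
  linarith

lemma key_dir {d : ℕ} {A Φ : Type} [Fintype A] [Nonempty A] [Fintype Φ] [Nonempty Φ]
    (r : Φ → A → Fin d → ℝ) (σ : A → ℝ) (θstar : Φ → Fin d → ℝ)
    (hopt : ∀ θ : Φ → Fin d → ℝ, dualObj r σ θstar ≤ dualObj r σ θ)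
    (σhat : A → ℝ)
    (hσhatdef : ∀ a, σhat a =
      Real.exp (-∑ f : Φ, dot (r f a) (θstar f)) /
        ∑ a', Real.exp (-∑ f : Φ, dot (r f a') (θstar f)))
    (f : Φ) (w : Fin d → ℝ) (c : ℝ)
    (hc : ∀ t ∈ Set.Ioc (0:ℝ) 1,
      (⨆ g, dot (expFeat r σ g) (θstar f + t • w)) ≤
        (⨆ g, dot (expFeat r σ g) (θstar f)) + t * c) :
    dot (expFeat r σhat f) w ≤ c := by
  classical
  set α : A → ℝ := fun a => -∑ f' : Φ, dot (r f' a) (θstar f') with hα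
  set β : A → ℝ := fun a => dot (r f a) w with hβ
  set G : ℝ → ℝ := fun t => ∑ a, Real.exp (α a - t * β a) with hGdef
  have hGpos : ∀ t, 0 < G t := fun t =>
    Finset.sum_pos (fun a _ => Real.exp_pos _) Finset.univ_nonempty
  set F : ℝ → ℝ := fun t => Real.log (G t) with hFdef
  set S : (Fin d → ℝ) → ℝ := fun u => ⨆ g, dot (expFeat r σ g) u with hS
  -- Step 1: the lower bound from optimality
  have step1 : ∀ t ∈ Set.Ioc (0:ℝ) 1, F 0 - t * c ≤ F t := by
    intro t ht
    set θt : Φ → Fin d → ℝ := Function.update θstar f (θstar f + t • w) with hθt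
    have hsum1 : ∑ f' : Φ, S (θt f') = S (θstar f + t • w) + ∑ f' ∈ Finset.univ \ {f}, S (θstar f') := by
      have : (fun f' => S (θt f')) = Function.update (S ∘ θstar) f (S (θstar f + t • w)) := by
        rw [hθt, ← Function.comp_update]; rfl
      calc ∑ f' : Φ, S (θt f') = ∑ f' : Φ, Function.update (S ∘ θstar) f (S (θstar f + t • w)) f' := by
            rw [← this]
        _ = _ := by
            rw [Finset.sum_update_of_mem (Finset.mem_univ f)]; rfl
    have hsum0 : ∑ f' : Φ, S (θstar f') = S (θstar f) + ∑ f' ∈ Finset.univ \ {f}, S (θstar f') := by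
      rw [← Finset.sum_sdiff (Finset.subset_univ {f}), Finset.sum_singleton, add_comm]
    have hexp : ∀ a, -∑ f' : Φ, dot (r f' a) (θt f') = α a - t * β a := by
      intro a
      have : (fun f' => dot (r f' a) (θt f'))
          = Function.update (fun f' => dot (r f' a) (θstar f')) f (dot (r f a) (θstar f + t • w)) := by
        funext f'
        by_cases h : f' = f
        · subst h; simp [hθt]
        · simp [hθt, Function.update_of_ne h]
      rw [this, Finset.sum_update_of_mem (Finset.mem_univ f), dot_add_right, dot_smul_right]
      have : ∑ f' : Φ, dot (r f' a) (θstar f')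
          = dot (r f a) (θstar f) + ∑ f' ∈ Finset.univ \ {f}, dot (r f' a) (θstar f') := by
        rw [← Finset.sum_sdiff (Finset.subset_univ {f}), Finset.sum_singleton, add_comm]
      rw [hα]; simp only
      rw [this, hβ]; ring
    have h0 : dualObj r σ θstar = ∑ f' : Φ, S (θstar f') + F 0 := by
      unfold dualObj
      congr 1
      rw [hFdef]; simp only; congr 1
      rw [hGdef]; simp only
      refine Finset.sum_congr rfl fun a _ => by rw [hα]; simp
    have h1 : dualObj r σ θt = ∑ f' : Φ, S (θt f') + F t := by
      unfold dualObj
      congr 1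
      rw [hFdef]; simp only; congr 1
      rw [hGdef]; simp only
      refine Finset.sum_congr rfl fun a _ => by rw [hexp a]
    have := hopt θt
    rw [h0, h1, hsum1, hsum0] at this
    have hcc : S (θstar f + t • w) ≤ S (θstar f) + t * c := hc t ht
    linarith
  -- Step 2: derivative of F at 0
  have hderivG : HasDerivAt G (∑ a, Real.exp (α a) * -(β a)) 0 := by
    have : HasDerivAt G (∑ a, Real.exp (α a - 0 * β a) * -(β a)) 0 := by
      apply HasDerivAt.fun_sum
      intro a _
      exact ((hasDerivAt_mul_const (β a)).const_sub (α a)).exp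
    simpa using this
  have hderivF : HasDerivAt F ((∑ a, Real.exp (α a) * -(β a)) / G 0) 0 :=
    hderivG.log (ne_of_gt (hGpos 0))
  -- Step 3: the derivative is ≥ -c
  have hslope : -c ≤ (∑ a, Real.exp (α a) * -(β a)) / G 0 := by
    have htend := hasDerivAt_iff_tendsto_slope.mp hderivF
    have htend' : Filter.Tendsto (slope F 0) (nhdsWithin 0 (Set.Ioi 0))
        (nhds ((∑ a, Real.exp (α a) * -(β a)) / G 0)) :=
      htend.mono_left (nhdsWithin_mono 0 (fun x hx => ne_of_gt hx))
    refine ge_of_tendsto htend' ?_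
    filter_upwards [Ioc_mem_nhdsGT_of_mem (Set.mem_Ico.mpr ⟨le_refl (0:ℝ), one_pos⟩)] with t ht
    have h1 := step1 t ht
    have ht0 : (0:ℝ) < t := ht.1
    rw [slope_def_field, sub_zero, le_div_iff₀ ht0]
    linarith
  -- Step 4: identify the derivative with -dot (expFeat r σhat f) w
  have hid : (∑ a, Real.exp (α a) * -(β a)) / G 0 = -dot (expFeat r σhat f) w := by
    have hG0 : G 0 = ∑ a', Real.exp (-∑ f' : Φ, dot (r f' a') (θstar f')) := by
      rw [hGdef]; simp [hα]
    rw [dot_expFeat, ← Finset.sum_neg_distrib, Finset.sum_div]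
    refine Finset.sum_congr rfl fun a _ => ?_
    rw [hσhatdef a, ← hG0]
    simp only [hβ, hα]
    have := ne_of_gt (hGpos 0)
    field_simp
  rw [hid] at hslope
  linarith

lemma clm_eq_dot {d : ℕ} (L : (Fin d → ℝ) →L[ℝ] ℝ) (y : Fin d → ℝ) :
    L y = dot y (fun k => L (fun j => if k = j then 1 else 0)) := by
  conv_lhs => rw [pi_eq_sum_univ y]
  rw [map_sum]
  unfold dot
  refine Finset.sum_congr rfl fun k _ => ?_
  rw [map_smul]
  simp

open Filter Set in
/-- Given optimal dual weights `θ*`, the corresponding Gibbs distribution lies in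
the standard ICE polytope and maximizes the Shannon entropy over it. -/
theorem maxent_ICE_primal_from_dual
    {d : ℕ} {A Φ : Type} [Fintype A] [Nonempty A] [Fintype Φ] [Nonempty Φ]
    (r : Φ → A → Fin d → ℝ) (σ : A → ℝ) (hσ : IsProb σ)
    (θstar : Φ → Fin d → ℝ)
    (hopt : ∀ θ : Φ → Fin d → ℝ, dualObj r σ θstar ≤ dualObj r σ θ)
    (σhat : A → ℝ)
    (hσhatdef : ∀ a, σhat a =
      Real.exp (-∑ f : Φ, dot (r f a) (θstar f)) /
        ∑ a', Real.exp (-∑ f : Φ, dot (r f a') (θstar f))) :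
    InICE r σ σhat ∧ ∀ τ : A → ℝ, InICE r σ τ → shannonEntropy τ ≤ shannonEntropy σhat := by
  classical
  set α : A → ℝ := fun a => -∑ f : Φ, dot (r f a) (θstar f) with hα
  set Z : ℝ := ∑ a', Real.exp (α a') with hZ
  have hZpos : 0 < Z := Finset.sum_pos (fun a _ => Real.exp_pos _) Finset.univ_nonempty
  have hσhat' : ∀ a, σhat a = Real.exp (α a) / Z := fun a => hσhatdef a
  -- σhat is a probability distribution
  have hprob : IsProb σhat := by
    constructor
    · intro a; rw [hσhat' a]; positivity
    · rw [Finset.sum_congr rfl fun a _ => hσhat' a, ← Finset.sum_div, ← hZ,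
        div_self (ne_of_gt hZpos)]
  set M : Φ → ℝ := fun f => ⨆ g, dot (expFeat r σ g) (θstar f) with hM
  have hbdd : ∀ u : Fin d → ℝ, BddAbove (Set.range fun g => dot (expFeat r σ g) u) :=
    fun u => Finite.bddAbove_range _
  -- membership in the ICE polytope
  have hmem : ∀ f : Φ, expFeat r σhat f ∈ convexHull ℝ (Set.range (expFeat r σ)) := by
    intro f
    by_contra hnot
    have hclosed : IsClosed (convexHull ℝ (Set.range (expFeat r σ))) :=
      ((Set.finite_range _).isCompact_convexHull ℝ).isClosed
    obtain ⟨L, u, hLx, hLs⟩ :=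
      geometric_hahn_banach_point_closed (convex_convexHull ℝ _) hclosed hnot
    set w : Fin d → ℝ := fun k => -(L (fun j => if k = j then 1 else 0)) with hw
    have hLdot : ∀ y, dot y w = -(L y) := by
      intro y
      rw [clm_eq_dot L y]
      unfold dot
      rw [← Finset.sum_neg_distrib]
      exact Finset.sum_congr rfl fun k _ => by rw [hw]; ring
    set c : ℝ := ⨆ g, dot (expFeat r σ g) w with hc
    have hcle : c ≤ -u := by
      refine ciSup_le fun g => ?_
      rw [hLdot]
      have := hLs _ (subset_convexHull ℝ _ (Set.mem_range_self g))
      linarith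
    have hkey := key_dir r σ θstar hopt σhat hσhatdef f w c ?_
    · rw [hLdot] at hkey; linarith
    · intro t ht
      refine ciSup_le fun g => ?_
      rw [dot_add_right, dot_smul_right]
      have h1 : dot (expFeat r σ g) (θstar f) ≤ M f := le_ciSup (hbdd _) g
      have h2 : dot (expFeat r σ g) w ≤ c := le_ciSup (hbdd _) g
      have := ht.1.le
      nlinarith
  -- complementary slackness
  have hslack : ∀ f : Φ, dot (expFeat r σhat f) (θstar f) = M f := by
    intro f
    have hle : dot (expFeat r σhat f) (θstar f) ≤ M f := by
      refine key_dir r σ θstar hopt σhat hσhatdef f (θstar f) (M f) ?_ |>.trans_eq rfl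
      intro t ht
      refine ciSup_le fun g => ?_
      rw [dot_add_right, dot_smul_right]
      have h1 : dot (expFeat r σ g) (θstar f) ≤ M f := le_ciSup (hbdd _) g
      have := ht.1.le
      nlinarith
    have hge : M f ≤ dot (expFeat r σhat f) (θstar f) := by
      have hkey := key_dir r σ θstar hopt σhat hσhatdef f (-(θstar f)) (-(M f)) ?_
      · rw [show -(θstar f) = (-1 : ℝ) • θstar f by simp, dot_smul_right] at hkey
        linarith
      · intro t ht
        refine ciSup_le fun g => ?_
        rw [show θstar f + t • -(θstar f) = (1 - t) • θstar f by
          rw [smul_neg, sub_smul, one_smul]; abel, dot_smul_right]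
        have h1 : dot (expFeat r σ g) (θstar f) ≤ M f := le_ciSup (hbdd _) g
        have ht1 : t ≤ 1 := ht.2
        nlinarith
    linarith
  -- entropy of σhat equals the optimal dual value
  have hent : shannonEntropy σhat = dualObj r σ θstar := by
    have hlog : ∀ a, Real.log (σhat a) = α a - Real.log Z := by
      intro a
      rw [hσhat' a, Real.log_div (Real.exp_ne_zero _) (ne_of_gt hZpos), Real.log_exp]
    have h1 : ∑ a, σhat a * Real.log (σhat a)
        = ∑ a, σhat a * α a - Real.log Z := by
      rw [Finset.sum_congr rfl fun a _ => by rw [hlog a, mul_sub]]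
      rw [Finset.sum_sub_distrib, ← Finset.sum_mul, hprob.2, one_mul]
    have h2 : ∑ a, σhat a * α a = -∑ f : Φ, M f := by
      have key : ∀ a, σhat a * α a = -∑ f : Φ, σhat a * dot (r f a) (θstar f) := fun a => by
        rw [hα]; simp only; rw [mul_neg, Finset.mul_sum]
      calc ∑ a, σhat a * α a = -∑ a, ∑ f : Φ, σhat a * dot (r f a) (θstar f) := by
            rw [← Finset.sum_neg_distrib]; exact Finset.sum_congr rfl fun a _ => key a
        _ = -∑ f : Φ, M f := by
            rw [Finset.sum_comm]
            congr 1
            exact Finset.sum_congr rfl fun f _ => by rw [← dot_expFeat, hslack f]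
    unfold shannonEntropy dualObj
    rw [h1, h2]
    rw [show (∑ a, Real.exp (-∑ f : Φ, dot (r f a) (θstar f))) = Z from rfl]
    ring
  refine ⟨⟨hprob, hmem⟩, fun τ hτ => ?_⟩
  calc shannonEntropy τ ≤ dualObj r σ θstar := weak_duality r σ θstar τ hτ
    _ = shannonEntropy σhat := hent.symm
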